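/- arXiv:1611.03935 — 4 statements merged into one kernel-verified Lean document; each statement's English description precedes it below -/
import Mathlib

section
/- For a standard Gaussian vector a in R^n and fixed unit vectors x0, x1 with angle θ between them, the expectation E[|⟨a, x0⟩ · ⟨a, x1⟩|] equals (2/π)(|sin θ| + arcsin(cos θ) · cos θ). -/
open MeasureTheory ProbabilityTheory Real Set Filter intervalIntegral
open RealInnerProductSpace


lemma my_lintegral_pi_prod : ∀ {n : ℕ} (μ : Fin n → Measure ℝ), (∀ i, SigmaFinite (μ i)) →
    ∀ (f : Fin n → ℝ → ENNReal), (∀ i, Measurable (f i)) →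
    ∫⁻ x, ∏ i, f i (x i) ∂Measure.pi μ = ∏ i, ∫⁻ x, f i x ∂μ i := by
  intro n
  induction n with
  | zero => intro μ _ f _; simp
  | succ n ih =>
    intro μ hμ f hf
    have := hμ
    have h1 := (measurePreserving_piFinSuccAbove μ 0)
    set F : ℝ × (Fin n → ℝ) → ENNReal := fun y => f 0 y.1 * ∏ j, f (Fin.succ j) (y.2 j) with hF
    have hFm : Measurable F := (hf 0).comp measurable_fst |>.mul
        (Finset.measurable_prod _ fun j _ => (hf _).comp ((measurable_pi_apply j).comp measurable_snd))
    have h2 : ∫⁻ y, F y ∂((μ 0).prod (Measure.pi fun j => μ ((0:Fin (n+1)).succAbove j)))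
        = (∫⁻ x, f 0 x ∂μ 0) * ∏ j, ∫⁻ x, f (Fin.succ j) x ∂μ (Fin.succ j) := by
      have := lintegral_prod_mul (μ := μ 0)
        (ν := (Measure.pi fun j => μ ((0:Fin (n+1)).succAbove j)))
        (f := f 0) (g := fun z => ∏ j, f (Fin.succ j) (z j)) (hf 0).aemeasurable
        (Finset.measurable_prod _ fun j _ => (hf _).comp (measurable_pi_apply j)).aemeasurable
      rw [hF]
      rw [this, ih _ (fun j => hμ _) _ (fun j => hf _)]
      congr 1
    calc ∫⁻ x, ∏ i, f i (x i) ∂Measure.pi μ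
        = ∫⁻ x, F ((MeasurableEquiv.piFinSuccAbove (fun _ => ℝ) 0) x) ∂Measure.pi μ := by
          refine lintegral_congr fun x => ?_
          rw [hF]
          simp [MeasurableEquiv.piFinSuccAbove_apply, Fin.prod_univ_succ, Fin.succAbove, Fin.tail]
      _ = (∫⁻ x, f 0 x ∂μ 0) * ∏ j, ∫⁻ x, f (Fin.succ j) x ∂μ (Fin.succ j) :=
          (h1.lintegral_comp hFm).trans h2
      _ = ∏ i, ∫⁻ x, f i x ∂μ i := by rw [Fin.prod_univ_succ]


noncomputable def gaussDen (n : ℕ) (a : EuclideanSpace ℝ (Fin n)) : ENNReal :=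
  ENNReal.ofReal ((Real.sqrt (2 * Real.pi))⁻¹ ^ n * Real.exp (-‖a‖ ^ 2 / 2))

lemma gaussDen_meas (n : ℕ) : Measurable (gaussDen n) := by
  unfold gaussDen
  exact (measurable_const.mul
    ((continuous_norm.measurable.pow_const 2).neg.div_const 2).exp).ennreal_ofReal

lemma pi_gaussian_eq (n : ℕ) : (Measure.pi fun _ : Fin n => gaussianReal 0 1)
    = (volume : Measure (Fin n → ℝ)).withDensity (fun x => ∏ i, gaussianPDF 0 1 (x i)) := by
  refine Measure.pi_eq fun s hs => ?_
  rw [withDensity_apply _ (MeasurableSet.univ_pi fun i => hs i),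
    ← lintegral_indicator (MeasurableSet.univ_pi fun i => hs i)]
  have key : ∀ x : Fin n → ℝ, (univ.pi s).indicator (fun x => ∏ i, gaussianPDF 0 1 (x i)) x
      = ∏ i, (s i).indicator (gaussianPDF 0 1) (x i) := by
    intro x
    by_cases hx : x ∈ univ.pi s
    · rw [indicator_of_mem hx]
      exact Finset.prod_congr rfl fun i _ => (indicator_of_mem (hx i (mem_univ i)) _).symm
    · rw [indicator_of_notMem hx]
      rw [mem_univ_pi] at hx
      push_neg at hx
      obtain ⟨i, hi⟩ := hx
      exact (Finset.prod_eq_zero (Finset.mem_univ i) (indicator_of_notMem hi _)).symm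
  simp_rw [key]
  rw [volume_pi, my_lintegral_pi_prod _ (fun _ => inferInstance) _
    (fun i => (measurable_gaussianPDF 0 1).indicator (hs i))]
  refine Finset.prod_congr rfl fun i _ => ?_
  rw [lintegral_indicator (hs i), gaussianReal_of_var_ne_zero 0 one_ne_zero,
    withDensity_apply _ (hs i)]

lemma nu_eq (n : ℕ) : (Measure.pi fun _ : Fin n => gaussianReal 0 1).map
      (EuclideanSpace.equiv (Fin n) ℝ).symm
    = (volume : Measure (EuclideanSpace ℝ (Fin n))).withDensity (gaussDen n) := by
  have hD : ∀ a : EuclideanSpace ℝ (Fin n),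
      (∏ i, gaussianPDF 0 1 (a i)) = gaussDen n a := by
    intro a
    unfold gaussDen gaussianPDF
    rw [← ENNReal.ofReal_prod_of_nonneg (fun i _ => gaussianPDFReal_nonneg 0 1 (a i))]
    congr 1
    unfold ProbabilityTheory.gaussianPDFReal
    rw [Finset.prod_mul_distrib, Finset.prod_const, ← Real.exp_sum]
    have hnorm : ‖a‖ ^ 2 = ∑ i, (a i) ^ 2 := by
      rw [EuclideanSpace.norm_eq, Real.sq_sqrt (Finset.sum_nonneg fun i _ => sq_nonneg _)]
      simp [Real.norm_eq_abs, sq_abs]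
    simp [hnorm, Finset.sum_div, neg_div, Finset.sum_neg_distrib]
  have hmeas : Measurable ((EuclideanSpace.equiv (Fin n) ℝ).symm :
      (Fin n → ℝ) → EuclideanSpace ℝ (Fin n)) :=
    (MeasurableEquiv.toLp 2 (Fin n → ℝ)).measurable
  ext S hS
  rw [Measure.map_apply hmeas hS, pi_gaussian_eq n,
    withDensity_apply _ (hmeas hS), withDensity_apply _ hS]
  have := (EuclideanSpace.volume_preserving_symm_measurableEquiv_toLp (Fin n)).map_eq
  have hfm : Measurable (fun a : Fin n → ℝ => ∏ i, gaussianPDF 0 1 (a i)) :=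
    Finset.measurable_prod _ fun i _ => (measurable_gaussianPDF 0 1).comp (measurable_pi_apply i)
  rw [← this, setLIntegral_map (hmeas hS) hfm
    (MeasurableEquiv.toLp 2 (Fin n → ℝ)).symm.measurable]
  have hpre : (MeasurableEquiv.toLp 2 (Fin n → ℝ)).symm ⁻¹'
      ((EuclideanSpace.equiv (Fin n) ℝ).symm ⁻¹' S) = S := rfl
  rw [hpre]
  exact setLIntegral_congr_fun hS (fun a _ => hD a)


lemma nu_map_L (n : ℕ) (L : EuclideanSpace ℝ (Fin n) ≃ₗᵢ[ℝ] EuclideanSpace ℝ (Fin n)) :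
    ((volume : Measure (EuclideanSpace ℝ (Fin n))).withDensity (gaussDen n)).map L
    = (volume : Measure (EuclideanSpace ℝ (Fin n))).withDensity (gaussDen n) := by
  ext S hS
  rw [Measure.map_apply L.continuous.measurable hS, withDensity_apply _ (L.continuous.measurable hS),
    withDensity_apply _ hS]
  have h1 : (volume : Measure (EuclideanSpace ℝ (Fin n))) = volume.map L.symm :=
    (L.symm.measurePreserving.map_eq).symm
  nth_rewrite 1 [h1]
  rw [setLIntegral_map (L.continuous.measurable hS) (gaussDen_meas n)
    L.symm.continuous.measurable]
  have h2 : (⇑L.symm ⁻¹' (⇑L ⁻¹' S)) = S := by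
    ext a; simp
  rw [h2]
  refine setLIntegral_congr_fun hS (fun a _ => ?_)
  unfold gaussDen
  rw [L.symm.norm_map]

lemma integral_nu_comp_L (n : ℕ) (L : EuclideanSpace ℝ (Fin n) ≃ₗᵢ[ℝ] EuclideanSpace ℝ (Fin n))
    (f : EuclideanSpace ℝ (Fin n) → ℝ) :
    ∫ a, f (L a) ∂((volume : Measure (EuclideanSpace ℝ (Fin n))).withDensity (gaussDen n))
    = ∫ a, f a ∂((volume : Measure (EuclideanSpace ℝ (Fin n))).withDensity (gaussDen n)) := by
  have hL : MeasurePreserving L ((volume : Measure (EuclideanSpace ℝ (Fin n))).withDensity (gaussDen n))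
      ((volume : Measure (EuclideanSpace ℝ (Fin n))).withDensity (gaussDen n)) :=
    ⟨L.continuous.measurable, nu_map_L n L⟩
  exact hL.integral_comp (L.toHomeomorph.toMeasurableEquiv.measurableEmbedding) f


lemma pi_map_pair {ι : Type*} [Fintype ι] [DecidableEq ι] (μ : Measure ℝ)
    [IsProbabilityMeasure μ] {i j : ι} (hij : i ≠ j) :
    (Measure.pi fun _ : ι => μ).map (fun a => (a i, a j)) = μ.prod μ := by
  refine (Measure.prod_eq fun S T hS hT => ?_).symm
  rw [Measure.map_apply (by fun_prop) (hS.prod hT)]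
  have hpre : (fun a : ι → ℝ => (a i, a j)) ⁻¹' (S ×ˢ T)
      = univ.pi (Function.update (Function.update (fun _ => univ) j T) i S) := by
    ext a
    simp only [mem_preimage, mem_prod, mem_univ_pi, Function.update_apply]
    constructor
    · rintro ⟨h1, h2⟩ k
      split_ifs with h h'
      · exact h ▸ h1
      · exact h' ▸ h2
      · exact mem_univ _
    · intro h
      refine ⟨?_, ?_⟩
      · have := h i; simpa using this
      · have := h j; simpa [hij.symm] using this
  rw [hpre, Measure.pi_pi]
  have : ∀ k, μ (Function.update (Function.update (fun _ => univ) j T) i S k)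
      = Function.update (Function.update (fun _ : ι => (1:ENNReal)) j (μ T)) i (μ S) k := by
    intro k
    simp only [Function.update_apply]
    split_ifs <;> simp
  rw [Finset.prod_congr rfl fun k _ => this k,
    Finset.prod_update_of_mem (Finset.mem_univ i),
    Finset.prod_update_of_mem (Finset.mem_sdiff.mpr ⟨Finset.mem_univ j, by simp [hij.symm]⟩)]
  simp [mul_comm]

lemma pi_map_single {ι : Type*} [Fintype ι] [DecidableEq ι] (μ : Measure ℝ)
    [IsProbabilityMeasure μ] (i : ι) :
    (Measure.pi fun _ : ι => μ).map (fun a => a i) = μ := by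
  ext S hS
  rw [Measure.map_apply (measurable_pi_apply i) hS]
  have hpre : (fun a : ι → ℝ => a i) ⁻¹' S = univ.pi (Function.update (fun _ => univ) i S) := by
    ext a
    simp only [mem_preimage, mem_univ_pi, Function.update_apply]
    constructor
    · intro h1 k; split_ifs with h; exacts [h ▸ h1, mem_univ _]
    · intro h; have := h i; simpa using this
  rw [hpre, Measure.pi_pi]
  have : ∀ k, μ (Function.update (fun _ => univ) i S k)
      = Function.update (fun _ : ι => (1:ENNReal)) i (μ S) k := by
    intro k; simp only [Function.update_apply]; split_ifs <;> simp
  rw [Finset.prod_congr rfl fun k _ => this k, Finset.prod_update_of_mem (Finset.mem_univ i)]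
  simp


noncomputable def Hfun (θ x : ℝ) : ℝ := (x * Real.cos θ)/2 + Real.sin (2*x - θ)/4

lemma Hfun_deriv (θ x : ℝ) : HasDerivAt (Hfun θ) (Real.cos x * Real.cos (x - θ)) x := by
  have h1 : HasDerivAt (fun x : ℝ => (x * Real.cos θ)/2) (Real.cos θ / 2) x := by
    simpa using ((hasDerivAt_id x).mul_const (Real.cos θ)).div_const 2
  have h2 : HasDerivAt (fun x : ℝ => 2*x - θ) 2 x := by
    simpa using ((hasDerivAt_id x).const_mul 2).sub_const θ
  have h3 : HasDerivAt (fun x : ℝ => Real.sin (2*x - θ)/4) (Real.cos (2*x - θ) * 2 / 4) x :=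
    (h2.sin).div_const 4
  have h := h1.add h3
  convert! h using 1
  have hpyth := Real.sin_sq_add_cos_sq x
  rw [Real.cos_sub, Real.cos_sub, Real.cos_two_mul, Real.sin_two_mul]
  ring_nf

lemma integral_cos_mul_cos (θ a b : ℝ) :
    ∫ x in a..b, Real.cos x * Real.cos (x - θ) = Hfun θ b - Hfun θ a := by
  refine integral_eq_sub_of_hasDerivAt (fun x _ => Hfun_deriv θ x) ?_
  exact (Continuous.intervalIntegrable (by continuity) a b)

lemma angular (θ : ℝ) (h0 : 0 < θ) (hπ : θ < Real.pi) :
    ∫ φ in Ioo (-Real.pi) Real.pi, |Real.cos φ * Real.cos (φ - θ)|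
      = 2 * (Real.sin θ + (Real.pi/2 - θ) * Real.cos θ) := by
  have pi_pos := Real.pi_pos
  set P : ℝ → ℝ := fun φ => |Real.cos φ * Real.cos (φ - θ)| with hPdef
  have hPcont : Continuous P := by continuity
  have hP : Function.Periodic P Real.pi := by
    intro x
    simp only [hPdef]
    have : x + Real.pi - θ = (x - θ) + Real.pi := by ring
    rw [this, Real.cos_add_pi, Real.cos_add_pi, neg_mul_neg]
  have hP2 : Function.Periodic P (2 * Real.pi) := by
    simpa [two_mul] using hP.add_period hP
  -- convert set integral to interval integral
  have step1 : ∫ φ in Ioo (-Real.pi) Real.pi, P φ = ∫ φ in (-Real.pi)..Real.pi, P φ := by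
    rw [intervalIntegral.integral_of_le (by linarith), ← MeasureTheory.integral_Ioc_eq_integral_Ioo]
  -- shift to θ-centred window
  have step2 : ∫ φ in (-Real.pi)..Real.pi, P φ
      = ∫ φ in (θ - Real.pi/2)..(θ - Real.pi/2 + 2*Real.pi), P φ := by
    have := hP2.intervalIntegral_add_eq (-Real.pi) (θ - Real.pi/2)
    rw [← this]
    norm_num
    ring_nf
  have hInt : ∀ a b : ℝ, IntervalIntegrable P volume a b :=
    fun a b => hPcont.intervalIntegrable a b
  have step3 : ∫ φ in (θ - Real.pi/2)..(θ - Real.pi/2 + 2*Real.pi), P φ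
      = 2 * ∫ φ in (θ - Real.pi/2)..(θ + Real.pi/2), P φ := by
    have hadj := intervalIntegral.integral_add_adjacent_intervals
      (hInt (θ - Real.pi/2) (θ + Real.pi/2)) (hInt (θ + Real.pi/2) (θ - Real.pi/2 + 2*Real.pi))
    have hsecond : ∫ φ in (θ + Real.pi/2)..(θ - Real.pi/2 + 2*Real.pi), P φ
        = ∫ φ in (θ - Real.pi/2)..(θ + Real.pi/2), P φ := by
      have := hP.intervalIntegral_add_eq (θ + Real.pi/2) (θ - Real.pi/2)
      have e1 : θ + Real.pi/2 + Real.pi = θ - Real.pi/2 + 2*Real.pi := by ring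
      have e2 : θ - Real.pi/2 + Real.pi = θ + Real.pi/2 := by ring
      rw [e1, e2] at this
      exact this
    rw [← hadj, hsecond]
    ring
  -- split at π/2
  have hle1 : θ - Real.pi/2 ≤ Real.pi/2 := by linarith
  have hle2 : Real.pi/2 ≤ θ + Real.pi/2 := by linarith
  have step4 : ∫ φ in (θ - Real.pi/2)..(θ + Real.pi/2), P φ
      = (∫ φ in (θ - Real.pi/2)..(Real.pi/2), P φ) + ∫ φ in (Real.pi/2)..(θ + Real.pi/2), P φ :=
    (intervalIntegral.integral_add_adjacent_intervals (hInt _ _) (hInt _ _)).symm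
  have piece1 : ∫ φ in (θ - Real.pi/2)..(Real.pi/2), P φ
      = Hfun θ (Real.pi/2) - Hfun θ (θ - Real.pi/2) := by
    rw [← integral_cos_mul_cos θ]
    refine intervalIntegral.integral_congr fun x hx => ?_
    rw [uIcc_of_le hle1] at hx
    have hc1 : 0 ≤ Real.cos x :=
      Real.cos_nonneg_of_mem_Icc ⟨by linarith [hx.1], by linarith [hx.2]⟩
    have hc2 : 0 ≤ Real.cos (x - θ) :=
      Real.cos_nonneg_of_mem_Icc ⟨by linarith [hx.1], by linarith [hx.2]⟩
    exact abs_of_nonneg (mul_nonneg hc1 hc2)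
  have piece2 : ∫ φ in (Real.pi/2)..(θ + Real.pi/2), P φ
      = -(Hfun θ (θ + Real.pi/2) - Hfun θ (Real.pi/2)) := by
    rw [← integral_cos_mul_cos θ, ← intervalIntegral.integral_neg]
    refine intervalIntegral.integral_congr fun x hx => ?_
    rw [uIcc_of_le hle2] at hx
    have hc1 : Real.cos x ≤ 0 :=
      Real.cos_nonpos_of_pi_div_two_le_of_le (by linarith [hx.1]) (by linarith [hx.2])
    have hc2 : 0 ≤ Real.cos (x - θ) :=
      Real.cos_nonneg_of_mem_Icc ⟨by linarith [hx.1], by linarith [hx.2]⟩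
    show |Real.cos x * Real.cos (x - θ)| = -(Real.cos x * Real.cos (x - θ))
    rw [abs_of_nonpos (mul_nonpos_of_nonpos_of_nonneg hc1 hc2)]
  rw [step1, step2, step3, step4, piece1, piece2]
  unfold Hfun
  have e1 : 2*(Real.pi/2) - θ = Real.pi - θ := by ring
  have e2 : 2*(θ - Real.pi/2) - θ = θ - Real.pi := by ring
  have e3 : 2*(θ + Real.pi/2) - θ = θ + Real.pi := by ring
  rw [e1, e2, e3, Real.sin_pi_sub, Real.sin_sub_pi, Real.sin_add_pi]
  ring


lemma radial : ∫ r in Ioi (0:ℝ), r^3 * Real.exp (-r^2/2) = 2 := by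
  set f : ℝ → ℝ := fun r => -(r^2+2) * Real.exp (-r^2/2) with hf
  have hderiv : ∀ r ∈ Ioi (0:ℝ), HasDerivAt f (r^3 * Real.exp (-r^2/2)) r := by
    intro r _
    have h1 : HasDerivAt (fun r : ℝ => -(r^2+2)) (-(2*r)) r := by
      simpa using (((hasDerivAt_pow 2 r).add_const 2).fun_neg)
    have h2' : HasDerivAt (fun r : ℝ => -r^2/2) (-r) r := by
      have := ((hasDerivAt_pow 2 r).neg.div_const 2)
      convert! this using 1
      ring
    have h2 : HasDerivAt (fun r : ℝ => Real.exp (-r^2/2)) (Real.exp (-r^2/2) * (-r)) r :=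
      h2'.exp
    have := h1.mul h2
    convert! this using 1
    ring
  have hcont : ContinuousWithinAt f (Ici 0) 0 := by
    apply Continuous.continuousWithinAt; continuity
  have htend : Tendsto f atTop (nhds 0) := by
    have l1 : Tendsto (fun t : ℝ => t * Real.exp (-t)) atTop (nhds 0) := by
      simpa using Real.tendsto_pow_mul_exp_neg_atTop_nhds_zero 1
    have l2 : Tendsto (fun t : ℝ => Real.exp (-t)) atTop (nhds 0) :=
      Real.tendsto_exp_neg_atTop_nhds_zero
    have lg : Tendsto (fun t : ℝ => -(2*(t * Real.exp (-t)) + 2 * Real.exp (-t))) atTop (nhds 0) := by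
      have := ((l1.const_mul 2).add (l2.const_mul 2)).neg
      simpa using this
    have lcomp : Tendsto (fun r : ℝ => r^2/2) atTop atTop := by
      exact (tendsto_pow_atTop (two_ne_zero)).atTop_div_const (by norm_num)
    have := lg.comp lcomp
    convert this using 1
    funext r
    simp only [Function.comp, hf]
    rw [neg_div]
    ring
  have hint : IntegrableOn (fun r : ℝ => r^3 * Real.exp (-r^2/2)) (Ioi 0) := by
    have h := integrable_rpow_mul_exp_neg_mul_sq (b := 1/2) (by norm_num) (s := 3) (by norm_num)
    have h2 : Integrable (fun x : ℝ => x^3 * Real.exp (-x^2/2)) := by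
      refine h.congr (Filter.Eventually.of_forall fun x => ?_)
      show x ^ (3:ℝ) * Real.exp (-(1/2) * x^2) = x^3 * Real.exp (-x^2/2)
      rw [show ((3:ℝ)) = ((3:ℕ):ℝ) by norm_num, Real.rpow_natCast]
      ring_nf
    exact h2.integrableOn
  have := integral_Ioi_of_hasDerivAt_of_tendsto hcont hderiv hint htend
  rw [this, hf]
  norm_num


lemma prod_gaussian_eq : (gaussianReal 0 1).prod (gaussianReal 0 1)
    = (volume : Measure (ℝ × ℝ)).withDensity
        (fun p => gaussianPDF 0 1 p.1 * gaussianPDF 0 1 p.2) := by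
  refine Measure.prod_eq fun S T hS hT => ?_
  rw [withDensity_apply _ (hS.prod hT)]
  rw [Measure.volume_eq_prod, ← Measure.prod_restrict]
  rw [lintegral_prod_mul ((measurable_gaussianPDF 0 1).aemeasurable)
    ((measurable_gaussianPDF 0 1).aemeasurable)]
  rw [gaussianReal_of_var_ne_zero 0 one_ne_zero, withDensity_apply _ hS, withDensity_apply _ hT]

lemma integral_prod_gaussian (f : ℝ × ℝ → ℝ) :
    ∫ p, f p ∂((gaussianReal 0 1).prod (gaussianReal 0 1))
    = ∫ p : ℝ × ℝ, (gaussianPDFReal 0 1 p.1 * gaussianPDFReal 0 1 p.2) * f p := by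
  rw [prod_gaussian_eq]
  have hw : Measurable (fun p : ℝ × ℝ =>
      ((gaussianPDFReal 0 1 p.1).toNNReal * (gaussianPDFReal 0 1 p.2).toNNReal : NNReal)) := by
    refine Measurable.mul ?_ ?_
    · exact ((measurable_gaussianPDFReal 0 1).comp measurable_fst).real_toNNReal
    · exact ((measurable_gaussianPDFReal 0 1).comp measurable_snd).real_toNNReal
  have heq : (fun p : ℝ × ℝ => gaussianPDF 0 1 p.1 * gaussianPDF 0 1 p.2)
      = fun p => (((gaussianPDFReal 0 1 p.1).toNNReal * (gaussianPDFReal 0 1 p.2).toNNReal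
        : NNReal) : ENNReal) := by
    funext p
    unfold gaussianPDF
    rw [ENNReal.coe_mul]
    rfl
  rw [heq, integral_withDensity_eq_integral_smul hw]
  refine integral_congr_ae (Filter.Eventually.of_forall fun p => ?_)
  simp only [NNReal.smul_def, NNReal.coe_mul, Real.coe_toNNReal', smul_eq_mul]
  rw [max_eq_left (gaussianPDFReal_nonneg 0 1 _), max_eq_left (gaussianPDFReal_nonneg 0 1 _)]

lemma int2d (θ : ℝ) (h0 : 0 < θ) (hπ : θ < Real.pi) :
    ∫ p : ℝ × ℝ, |p.1 * (Real.cos θ * p.1 + Real.sin θ * p.2)|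
      ∂((gaussianReal 0 1).prod (gaussianReal 0 1))
    = (2 / Real.pi) * (Real.sin θ + (Real.pi/2 - θ) * Real.cos θ) := by
  have pi_pos := Real.pi_pos
  rw [integral_prod_gaussian]
  rw [← integral_comp_polarCoord_symm]
  have hmeas : MeasurableSet polarCoord.target := polarCoord.open_target.measurableSet
  have key : ∀ p ∈ polarCoord.target,
      p.1 • ((fun q : ℝ × ℝ => (gaussianPDFReal 0 1 q.1 * gaussianPDFReal 0 1 q.2) *
          |q.1 * (Real.cos θ * q.1 + Real.sin θ * q.2)|) (polarCoord.symm p))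
      = ((2*Real.pi)⁻¹ * (p.1^3 * Real.exp (-p.1^2/2))) * |Real.cos p.2 * Real.cos (p.2 - θ)| := by
    rintro ⟨r, φ⟩ hp
    rw [polarCoord_target] at hp
    have hr : 0 < r := hp.1
    have hsymm : polarCoord.symm (r, φ) = (r * Real.cos φ, r * Real.sin φ) :=
      polarCoord_symm_apply _
    rw [hsymm]
    unfold gaussianPDFReal
    simp only [NNReal.coe_one, mul_one, sub_zero]
    have hexp : Real.exp (-(r * Real.cos φ)^2/2) *
        Real.exp (-(r * Real.sin φ)^2/2) = Real.exp (-r^2/2) := by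
      rw [← Real.exp_add]
      congr 1
      have hcs := Real.sin_sq_add_cos_sq φ
      nlinarith [hcs]
    have hc : (Real.sqrt (2*Real.pi))⁻¹ * (Real.sqrt (2*Real.pi))⁻¹ = (2*Real.pi)⁻¹ := by
      rw [← mul_inv, Real.mul_self_sqrt (by positivity)]
    have habs : |r * Real.cos φ * (Real.cos θ * (r * Real.cos φ) + Real.sin θ * (r * Real.sin φ))|
        = r^2 * |Real.cos φ * Real.cos (φ - θ)| := by
      rw [Real.cos_sub]
      rw [show r * Real.cos φ * (Real.cos θ * (r * Real.cos φ) + Real.sin θ * (r * Real.sin φ))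
        = r^2 * (Real.cos φ * (Real.cos φ * Real.cos θ + Real.sin φ * Real.sin θ)) by ring]
      rw [abs_mul, abs_of_nonneg (sq_nonneg r)]
    rw [habs, smul_eq_mul,
      show (Real.sqrt (2*Real.pi))⁻¹ * Real.exp (-(r * Real.cos φ)^2/2) *
        ((Real.sqrt (2*Real.pi))⁻¹ * Real.exp (-(r * Real.sin φ)^2/2)) *
        (r^2 * |Real.cos φ * Real.cos (φ - θ)|)
        = ((Real.sqrt (2*Real.pi))⁻¹ * (Real.sqrt (2*Real.pi))⁻¹) *
          (Real.exp (-(r * Real.cos φ)^2/2) * Real.exp (-(r * Real.sin φ)^2/2)) *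
          (r^2 * |Real.cos φ * Real.cos (φ - θ)|) from by ring, hexp, hc]
    ring
  rw [setIntegral_congr_fun hmeas key]
  rw [polarCoord_target, Measure.volume_eq_prod, ← Measure.prod_restrict]
  have := integral_prod_mul (μ := volume.restrict (Ioi (0:ℝ)))
    (ν := volume.restrict (Ioo (-Real.pi) Real.pi))
    (f := fun r => (2*Real.pi)⁻¹ * (r^3 * Real.exp (-r^2/2)))
    (g := fun φ => |Real.cos φ * Real.cos (φ - θ)|)
  rw [this, MeasureTheory.integral_const_mul, radial, angular θ h0 hπ, mul_inv]
  ring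


lemma integrable_sq_exp : Integrable (fun x : ℝ => x^2 * Real.exp (-x^2/2)) := by
  have h := integrable_rpow_mul_exp_neg_mul_sq (b := 1/2) (by norm_num) (s := 2) (by norm_num)
  refine h.congr (Filter.Eventually.of_forall fun x => ?_)
  show x ^ (2:ℝ) * Real.exp (-(1/2) * x^2) = x^2 * Real.exp (-x^2/2)
  rw [show ((2:ℝ)) = ((2:ℕ):ℝ) by norm_num, Real.rpow_natCast]
  ring_nf

lemma integrable_exp_neg_sq_half : Integrable (fun x : ℝ => Real.exp (-x^2/2)) := by
  have h := integrable_exp_neg_mul_sq (b := 1/2) (by norm_num)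
  refine h.congr (Filter.Eventually.of_forall fun x => ?_)
  ring_nf

lemma integral_exp_neg_sq_half : ∫ x : ℝ, Real.exp (-x^2/2) = Real.sqrt (2*Real.pi) := by
  have h := integral_gaussian (1/2)
  rw [show Real.pi / (1/2) = 2*Real.pi by ring] at h
  rw [← h]
  congr 1
  funext x
  ring_nf

lemma integral_sq_exp : ∫ x : ℝ, x^2 * Real.exp (-x^2/2) = Real.sqrt (2*Real.pi) := by
  set f : ℝ → ℝ := fun x => -x * Real.exp (-x^2/2) with hf
  have hderiv : ∀ x : ℝ, HasDerivAt f ((x^2 - 1) * Real.exp (-x^2/2)) x := by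
    intro x
    have h1 : HasDerivAt (fun x : ℝ => -x) (-1) x := (hasDerivAt_id x).neg
    have h2' : HasDerivAt (fun x : ℝ => -x^2/2) (-x) x := by
      have := ((hasDerivAt_pow 2 x).neg.div_const 2)
      convert! this using 1
      ring
    have h2 : HasDerivAt (fun x : ℝ => Real.exp (-x^2/2)) (Real.exp (-x^2/2) * (-x)) x := h2'.exp
    have := h1.mul h2
    convert! this using 1
    ring
  have hint : Integrable (fun x : ℝ => (x^2 - 1) * Real.exp (-x^2/2)) := by
    have := integrable_sq_exp.sub integrable_exp_neg_sq_half
    refine this.congr (Filter.Eventually.of_forall fun x => ?_)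
    simp only [Pi.sub_apply]
    ring
  have hco : Tendsto f (cocompact ℝ) (nhds 0) := by
    have h := tendsto_rpow_abs_mul_exp_neg_mul_sq_cocompact (a := 1/2) (by norm_num) 1
    refine squeeze_zero_norm (fun x => ?_) h
    rw [hf]
    simp only [norm_eq_abs, abs_mul, abs_neg, Real.rpow_one, Real.abs_exp]
    rw [show -(1/2) * x^2 = -x^2/2 by ring]
  have hbot : Tendsto f atBot (nhds 0) :=
    hco.mono_left (by rw [cocompact_eq_atBot_atTop]; exact le_sup_left)
  have htop : Tendsto f atTop (nhds 0) :=
    hco.mono_left (by rw [cocompact_eq_atBot_atTop]; exact le_sup_right)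
  have := integral_of_hasDerivAt_of_tendsto hderiv hint hbot htop
  have hsplit : ∫ x : ℝ, (x^2 - 1) * Real.exp (-x^2/2)
      = (∫ x : ℝ, x^2 * Real.exp (-x^2/2)) - ∫ x : ℝ, Real.exp (-x^2/2) := by
    rw [← integral_sub integrable_sq_exp integrable_exp_neg_sq_half]
    congr 1; funext x; ring
  rw [this] at hsplit
  rw [integral_exp_neg_sq_half] at hsplit
  linarith [hsplit]


lemma integral_gaussian1d (f : ℝ → ℝ) :
    ∫ x, f x ∂(gaussianReal 0 1) = ∫ x : ℝ, gaussianPDFReal 0 1 x * f x := by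
  rw [gaussianReal_of_var_ne_zero 0 one_ne_zero]
  have hw : Measurable (fun x : ℝ => (gaussianPDFReal 0 1 x).toNNReal) :=
    (measurable_gaussianPDFReal 0 1).real_toNNReal
  have heq : (gaussianPDF 0 1) = fun x => (((gaussianPDFReal 0 1 x).toNNReal : NNReal) : ENNReal) := by
    funext x; rfl
  rw [heq, integral_withDensity_eq_integral_smul hw]
  refine integral_congr_ae (Filter.Eventually.of_forall fun x => ?_)
  simp only [NNReal.smul_def, Real.coe_toNNReal', smul_eq_mul]
  rw [max_eq_left (gaussianPDFReal_nonneg 0 1 _)]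

lemma gauss_second_moment : ∫ x, x^2 ∂(gaussianReal 0 1) = 1 := by
  rw [integral_gaussian1d]
  have : ∀ x : ℝ, gaussianPDFReal 0 1 x * x^2
      = (Real.sqrt (2*Real.pi))⁻¹ * (x^2 * Real.exp (-x^2/2)) := by
    intro x
    unfold gaussianPDFReal
    simp only [NNReal.coe_one, mul_one, sub_zero]
    ring
  rw [integral_congr_ae (Filter.Eventually.of_forall this), MeasureTheory.integral_const_mul, integral_sq_exp,
    inv_mul_cancel₀ (by positivity)]


lemma integral_nu_basis (n : ℕ) (b : OrthonormalBasis (Fin n) ℝ (EuclideanSpace ℝ (Fin n)))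
    (f : EuclideanSpace ℝ (Fin n) → ℝ) (hf : Continuous f) :
    ∫ a, f a ∂((Measure.pi fun _ : Fin n => gaussianReal 0 1).map
        (EuclideanSpace.equiv (Fin n) ℝ).symm)
    = ∫ x, f (b.repr.symm ((EuclideanSpace.equiv (Fin n) ℝ).symm x))
        ∂(Measure.pi fun _ : Fin n => gaussianReal 0 1) := by
  set L : EuclideanSpace ℝ (Fin n) ≃ₗᵢ[ℝ] EuclideanSpace ℝ (Fin n) := b.repr.symm with hL
  have hmeas : Measurable ((EuclideanSpace.equiv (Fin n) ℝ).symm :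
      (Fin n → ℝ) → EuclideanSpace ℝ (Fin n)) :=
    (MeasurableEquiv.toLp 2 (Fin n → ℝ)).measurable
  calc ∫ a, f a ∂((Measure.pi fun _ : Fin n => gaussianReal 0 1).map
        (EuclideanSpace.equiv (Fin n) ℝ).symm)
      = ∫ a, f a ∂((volume : Measure (EuclideanSpace ℝ (Fin n))).withDensity (gaussDen n)) := by
        rw [nu_eq]
    _ = ∫ a, f (L a) ∂((volume : Measure (EuclideanSpace ℝ (Fin n))).withDensity (gaussDen n)) :=
        (integral_nu_comp_L n L f).symm
    _ = ∫ a, f (L a) ∂((Measure.pi fun _ : Fin n => gaussianReal 0 1).map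
        (EuclideanSpace.equiv (Fin n) ℝ).symm) := by rw [nu_eq]
    _ = ∫ x, f (L ((EuclideanSpace.equiv (Fin n) ℝ).symm x))
          ∂(Measure.pi fun _ : Fin n => gaussianReal 0 1) :=
        integral_map hmeas.aemeasurable ((hf.comp L.continuous).aestronglyMeasurable)

lemma inner_sq_integral (n : ℕ) (x0 : EuclideanSpace ℝ (Fin n)) (hx0 : ‖x0‖ = 1) :
    ∫ a : EuclideanSpace ℝ (Fin n), (⟪a, x0⟫ : ℝ)^2
      ∂((Measure.pi fun _ : Fin n => gaussianReal 0 1).map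
          (EuclideanSpace.equiv (Fin n) ℝ).symm) = 1 := by
  -- n ≥ 1
  have hn : 0 < n := by
    rcases Nat.eq_zero_or_pos n with h | h
    · subst h
      rw [EuclideanSpace.norm_eq] at hx0
      simp at hx0
    · exact h
  set i0 : Fin n := ⟨0, hn⟩
  -- orthonormal basis containing x0
  have hcard : Module.finrank ℝ (EuclideanSpace ℝ (Fin n)) = Fintype.card (Fin n) := by simp
  have hres : Orthonormal ℝ (({i0} : Set (Fin n)).restrict (fun _ => x0)) := by
    constructor
    · intro i; exact hx0
    · intro i j hij
      exact absurd (Subtype.ext ((i.2 : i.1 ∈ ({i0} : Set (Fin n))).trans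
        ((j.2 : j.1 ∈ ({i0} : Set (Fin n)))).symm)) hij
  obtain ⟨b, hb⟩ := hres.exists_orthonormalBasis_extension_of_card_eq hcard
  have hb0 : b i0 = x0 := hb i0 rfl
  have hf : Continuous (fun a : EuclideanSpace ℝ (Fin n) => (⟪a, x0⟫ : ℝ)^2) :=
    (continuous_id.inner continuous_const).pow 2
  rw [integral_nu_basis n b _ hf]
  have hpt : ∀ x : Fin n → ℝ,
      (⟪b.repr.symm ((EuclideanSpace.equiv (Fin n) ℝ).symm x), x0⟫ : ℝ)^2 = (x i0)^2 := by
    intro x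
    congr 1
    rw [real_inner_comm, ← hb0, ← OrthonormalBasis.repr_apply_apply,
      LinearIsometryEquiv.apply_symm_apply]
    rfl
  simp_rw [hpt]
  have hmap := pi_map_single (gaussianReal 0 1) i0
  calc ∫ x : Fin n → ℝ, (x i0)^2 ∂(Measure.pi fun _ : Fin n => gaussianReal 0 1)
      = ∫ t, t^2 ∂((Measure.pi fun _ : Fin n => gaussianReal 0 1).map (fun a => a i0)) := by
        exact (integral_map (f := fun t : ℝ => t^2) (φ := fun a : Fin n → ℝ => a i0)
          (measurable_pi_apply i0).aemeasurable
          ((continuous_pow 2).aestronglyMeasurable)).symm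
    _ = 1 := by rw [hmap, gauss_second_moment]


theorem expectation_abs_inner_mul_inner
    (n : ℕ) (x0 x1 : EuclideanSpace ℝ (Fin n))
    (hx0 : ‖x0‖ = 1) (hx1 : ‖x1‖ = 1)
    (θ : ℝ) (hθ : θ ∈ Set.Icc (0:ℝ) Real.pi)
    (hcos : Real.cos θ = ⟪x0, x1⟫) :
    ∫ a : EuclideanSpace ℝ (Fin n),
        |⟪a, x0⟫ * ⟪a, x1⟫|
        ∂((Measure.pi fun _ : Fin n => gaussianReal 0 1).map
            (EuclideanSpace.equiv (Fin n) ℝ).symm) =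
      (2 / Real.pi) * (|Real.sin θ| + Real.arcsin (Real.cos θ) * Real.cos θ) := by
  obtain ⟨hθ0, hθπ⟩ := hθ
  have pi_pos := Real.pi_pos
  have harcsin : Real.arcsin (Real.cos θ) = Real.pi/2 - θ := by
    rw [← Real.sin_pi_div_two_sub, Real.arcsin_sin (by linarith) (by linarith)]
  have habs_sin : |Real.sin θ| = Real.sin θ :=
    abs_of_nonneg (Real.sin_nonneg_of_nonneg_of_le_pi hθ0 hθπ)
  rw [harcsin, habs_sin]
  rcases eq_or_lt_of_le hθ0 with h0 | h0
  · -- θ = 0 : x1 = x0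
    have hx : x1 = x0 := by
      have h1 : (⟪x0, x1⟫ : ℝ) = 1 := by rw [← hcos, ← h0, Real.cos_zero]
      exact ((inner_eq_one_iff_of_norm_eq_one hx0 hx1).mp h1).symm
    subst hx
    rw [← h0]
    have hpt : ∀ a : EuclideanSpace ℝ (Fin n), |(⟪a, x1⟫ : ℝ) * ⟪a, x1⟫| = (⟪a, x1⟫ : ℝ)^2 := by
      intro a; rw [abs_mul_self, sq]
    simp_rw [hpt]
    rw [inner_sq_integral n x1 hx1]
    rw [Real.sin_zero, Real.cos_zero]
    field_simp
    ring
  rcases eq_or_lt_of_le hθπ with hπ | hπ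
  · -- θ = π : x1 = -x0
    have hx : x1 = -x0 := by
      have h1 : (⟪x0, -x1⟫ : ℝ) = 1 := by
        rw [inner_neg_right, ← hcos, hπ, Real.cos_pi]; norm_num
      have h2 : x0 = -x1 :=
        (inner_eq_one_iff_of_norm_eq_one hx0 (by rw [norm_neg]; exact hx1)).mp h1
      rw [h2]; simp
    subst hx
    rw [hπ]
    have hpt : ∀ a : EuclideanSpace ℝ (Fin n), |(⟪a, x0⟫ : ℝ) * ⟪a, -x0⟫| = (⟪a, x0⟫ : ℝ)^2 := by
      intro a
      rw [inner_neg_right, mul_neg, abs_neg, abs_mul_self, sq]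
    simp_rw [hpt]
    rw [inner_sq_integral n x0 hx0]
    rw [Real.sin_pi, Real.cos_pi]
    field_simp
    ring
  · -- generic case: 0 < θ < π
    set ρ : ℝ := Real.cos θ with hρ
    set s : ℝ := Real.sin θ with hs
    have hspos : 0 < s := Real.sin_pos_of_pos_of_lt_pi h0 hπ
    have hinner01 : (⟪x0, x1⟫ : ℝ) = ρ := hcos.symm
    have hx0sq : (⟪x0, x0⟫ : ℝ) = 1 := by
      rw [real_inner_self_eq_norm_sq, hx0]; norm_num
    set v1 : EuclideanSpace ℝ (Fin n) := s⁻¹ • (x1 - ρ • x0) with hv1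
    have hsub_sq : ‖x1 - ρ • x0‖^2 = s^2 := by
      rw [@norm_sub_sq_real, real_inner_smul_right, real_inner_comm x0 x1, hinner01,
        norm_smul, hx1, hx0]
      have hsρ : s^2 = 1 - ρ^2 := by rw [hs, hρ, Real.sin_sq]
      rw [hsρ]
      simp [Real.norm_eq_abs]
      nlinarith [sq_abs ρ]
    have hsub_norm : ‖x1 - ρ • x0‖ = s := by
      rw [← Real.sqrt_sq (norm_nonneg (x1 - ρ • x0)), hsub_sq, Real.sqrt_sq hspos.le]
    have hv1norm : ‖v1‖ = 1 := by
      rw [hv1, norm_smul, hsub_norm, Real.norm_eq_abs, abs_of_pos (inv_pos.mpr hspos),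
        inv_mul_cancel₀ (ne_of_gt hspos)]
    have hv1inner : (⟪x0, v1⟫ : ℝ) = 0 := by
      rw [hv1, real_inner_smul_right, inner_sub_right, real_inner_smul_right, hinner01, hx0sq]
      ring
    have hx1dec : x1 = ρ • x0 + s • v1 := by
      rw [hv1, smul_smul, mul_inv_cancel₀ (ne_of_gt hspos), one_smul]
      abel
    have honW : Orthonormal ℝ ![x0, v1] := by
      constructor
      · intro i
        fin_cases i
        · simpa using hx0
        · simpa using hv1norm
      · intro i j hij
        fin_cases i <;> fin_cases j
        · exact absurd rfl hij
        · simp only [Matrix.cons_val_zero, Matrix.cons_val_one, Matrix.head_cons]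
          exact hv1inner
        · simp only [Matrix.cons_val_zero, Matrix.cons_val_one, Matrix.head_cons]
          rw [real_inner_comm]; exact hv1inner
        · exact absurd rfl hij
    have hn2 : 2 ≤ n := by
      have := honW.linearIndependent.fintype_card_le_finrank
      simpa using this
    set i0 : Fin n := ⟨0, by omega⟩ with hi0
    set i1 : Fin n := ⟨1, by omega⟩ with hi1
    have hne : i0 ≠ i1 := Fin.ne_of_val_ne (by norm_num)
    have hcard : Module.finrank ℝ (EuclideanSpace ℝ (Fin n)) = Fintype.card (Fin n) := by simp
    set v : Fin n → EuclideanSpace ℝ (Fin n) := fun i => if i = i0 then x0 else v1 with hvdef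
    have hvi0 : v i0 = x0 := by simp [hvdef]
    have hvi1 : v i1 = v1 := by simp [hvdef, hne.symm]
    have hres : Orthonormal ℝ (({i0, i1} : Set (Fin n)).restrict v) := by
      constructor
      · rintro ⟨i, hi⟩
        have hi' : i = i0 ∨ i = i1 := by simpa using hi
        rcases hi' with rfl | rfl
        · show ‖v i0‖ = 1; rw [hvi0]; exact hx0
        · show ‖v i1‖ = 1; rw [hvi1]; exact hv1norm
      · rintro ⟨i, hi⟩ ⟨j, hj⟩ hij
        have hi' : i = i0 ∨ i = i1 := by simpa using hi
        have hj' : j = i0 ∨ j = i1 := by simpa using hj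
        have hne' : i ≠ j := fun h => hij (Subtype.ext h)
        rcases hi' with rfl | rfl <;> rcases hj' with rfl | rfl
        · exact absurd rfl hne'
        · show (⟪v i0, v i1⟫ : ℝ) = 0; rw [hvi0, hvi1]; exact hv1inner
        · show (⟪v i1, v i0⟫ : ℝ) = 0; rw [hvi0, hvi1, real_inner_comm]; exact hv1inner
        · exact absurd rfl hne'
    obtain ⟨b, hb⟩ := hres.exists_orthonormalBasis_extension_of_card_eq hcard
    have hb0 : b i0 = x0 := by rw [hb i0 (by left; rfl)]; exact hvi0
    have hb1 : b i1 = v1 := by rw [hb i1 (by right; rfl)]; exact hvi1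
    have hf : Continuous (fun a : EuclideanSpace ℝ (Fin n) => |(⟪a, x0⟫ : ℝ) * ⟪a, x1⟫|) :=
      ((continuous_id.inner continuous_const).mul (continuous_id.inner continuous_const)).abs
    rw [integral_nu_basis n b _ hf]
    have hy0 : ∀ y : EuclideanSpace ℝ (Fin n), (⟪b.repr.symm y, x0⟫ : ℝ) = y i0 := by
      intro y
      rw [real_inner_comm, ← hb0, ← OrthonormalBasis.repr_apply_apply,
        LinearIsometryEquiv.apply_symm_apply]
    have hy1' : ∀ y : EuclideanSpace ℝ (Fin n), (⟪b.repr.symm y, v1⟫ : ℝ) = y i1 := by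
      intro y
      rw [real_inner_comm, ← hb1, ← OrthonormalBasis.repr_apply_apply,
        LinearIsometryEquiv.apply_symm_apply]
    have hy1 : ∀ y : EuclideanSpace ℝ (Fin n),
        (⟪b.repr.symm y, x1⟫ : ℝ) = ρ * y i0 + s * y i1 := by
      intro y
      rw [hx1dec, inner_add_right, real_inner_smul_right, real_inner_smul_right, hy0 y, hy1' y]
    have hpt : ∀ x : Fin n → ℝ,
        |(⟪b.repr.symm ((EuclideanSpace.equiv (Fin n) ℝ).symm x), x0⟫ : ℝ) *
          ⟪b.repr.symm ((EuclideanSpace.equiv (Fin n) ℝ).symm x), x1⟫|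
        = |x i0 * (ρ * x i0 + s * x i1)| := by
      intro x
      rw [hy0, hy1]
      rfl
    simp_rw [hpt]
    have hmeas_pair : Measurable (fun a : Fin n → ℝ => (a i0, a i1)) :=
      (measurable_pi_apply i0).prodMk (measurable_pi_apply i1)
    have hf2 : Continuous (fun p : ℝ × ℝ => |p.1 * (ρ * p.1 + s * p.2)|) :=
      (continuous_fst.mul ((continuous_const.mul continuous_fst).add
        (continuous_const.mul continuous_snd))).abs
    calc ∫ x : Fin n → ℝ, |x i0 * (ρ * x i0 + s * x i1)|
          ∂(Measure.pi fun _ : Fin n => gaussianReal 0 1)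
        = ∫ p : ℝ × ℝ, |p.1 * (ρ * p.1 + s * p.2)|
            ∂((Measure.pi fun _ : Fin n => gaussianReal 0 1).map (fun a => (a i0, a i1))) :=
          (integral_map (f := fun p : ℝ × ℝ => |p.1 * (ρ * p.1 + s * p.2)|)
            hmeas_pair.aemeasurable hf2.aestronglyMeasurable).symm
      _ = ∫ p : ℝ × ℝ, |p.1 * (ρ * p.1 + s * p.2)|
            ∂((gaussianReal 0 1).prod (gaussianReal 0 1)) := by
          rw [pi_map_pair _ hne]
      _ = (2 / Real.pi) * (s + (Real.pi/2 - θ) * ρ) := int2d θ h0 hπ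
end

section
/- For all θ ∈ [0, π], |sin θ| + arcsin(cos θ) · cos θ ≥ 1. -/
open Real

lemma aux_cos_add_mul_sin {x : ℝ} (h1 : -(π/2) ≤ x) (h2 : x ≤ π/2) :
    1 ≤ Real.cos x + x * Real.sin x := by
  have hcos : 1 - x ^ 2 / 2 ≤ Real.cos x := Real.one_sub_sq_div_two_le_cos
  have hpi : (3 : ℝ) < π := Real.pi_gt_three
  have hpi4 : π < 4 := Real.pi_lt_d2.trans (by norm_num)
  have hsin : 2 / π * x ^ 2 ≤ x * Real.sin x := by
    rcases le_or_gt 0 x with hx | hx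
    · have := Real.mul_le_sin hx h2
      nlinarith
    · have := Real.mul_le_sin (x := -x) (by linarith) (by linarith)
      rw [Real.sin_neg] at this
      nlinarith
  have hx2 : x ^ 2 ≤ (π/2) ^ 2 := by nlinarith
  have hpos : 0 < π := Real.pi_pos
  have key : x ^ 2 / 2 ≤ 2 / π * x ^ 2 := by
    rw [div_mul_eq_mul_div, le_div_iff₀ hpos]
    nlinarith [sq_nonneg x]
  linarith

theorem sin_add_arcsin_cos_ge_one :
    ∀ θ ∈ Set.Icc (0 : ℝ) Real.pi,
      |Real.sin θ| + Real.arcsin (Real.cos θ) * Real.cos θ ≥ 1 := by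
  intro θ ⟨h0, hπ⟩
  have hsin : 0 ≤ Real.sin θ := Real.sin_nonneg_of_nonneg_of_le_pi h0 hπ
  rw [abs_of_nonneg hsin]
  have hc : Real.cos θ = Real.sin (π/2 - θ) := by rw [Real.sin_pi_div_two_sub]
  have ha : Real.arcsin (Real.cos θ) = π/2 - θ := by
    rw [hc, Real.arcsin_sin (by linarith) (by linarith)]
  rw [ha, hc]
  have hs : Real.sin θ = Real.cos (π/2 - θ) := by rw [Real.cos_pi_div_two_sub]
  rw [hs]
  have := aux_cos_add_mul_sin (x := π/2 - θ) (by linarith) (by linarith)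
  linarith
end

section
/- Let x0 ∈ R^n be nonzero and a1, ..., am ∈ R^n with y_i = |⟨a_i, x0⟩|. Suppose φ ∈ R^n satisfies: for every nonzero h ∈ R^n, if ⟨a_i, h⟩⟨a_i, x0⟩ ≤ 0 for all i, then ⟨φ, h⟩ < 0. Then x0 is the unique maximizer of ⟨φ, x⟩ over the set {x : |⟨a_i, x⟩| ≤ y_i for all i}. -/
open RealInnerProductSpace

theorem phasemax_unique_maximizer
    (n m : ℕ) (x0 φ : EuclideanSpace ℝ (Fin n)) (a : Fin m → EuclideanSpace ℝ (Fin n))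
    (hx0 : x0 ≠ 0)
    (hcert : ∀ h : EuclideanSpace ℝ (Fin n), h ≠ 0 →
      (∀ i, ⟪a i, h⟫ * ⟪a i, x0⟫ ≤ 0) → ⟪φ, h⟫ < 0) :
    (∀ i, |⟪a i, x0⟫| ≤ |⟪a i, x0⟫|) ∧
    ∀ x : EuclideanSpace ℝ (Fin n),
      (∀ i, |⟪a i, x⟫| ≤ |⟪a i, x0⟫|) → x ≠ x0 → ⟪φ, x⟫ < ⟪φ, x0⟫ := by
  refine ⟨fun i => le_refl _, fun x hx hne => ?_⟩
  have hh : x - x0 ≠ 0 := sub_ne_zero.mpr hne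
  have key : ∀ i, ⟪a i, x - x0⟫ * ⟪a i, x0⟫ ≤ 0 := by
    intro i
    have h1 : ⟪a i, x - x0⟫ = ⟪a i, x⟫ - ⟪a i, x0⟫ := inner_sub_right _ _ _
    have h2 : ⟪a i, x⟫ * ⟪a i, x0⟫ ≤ |⟪a i, x⟫| * |⟪a i, x0⟫| := by
      calc ⟪a i, x⟫ * ⟪a i, x0⟫ ≤ |⟪a i, x⟫ * ⟪a i, x0⟫| := le_abs_self _
        _ = |⟪a i, x⟫| * |⟪a i, x0⟫| := abs_mul _ _
    have h3 : |⟪a i, x⟫| * |⟪a i, x0⟫| ≤ |⟪a i, x0⟫| * |⟪a i, x0⟫| :=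
      mul_le_mul_of_nonneg_right (hx i) (abs_nonneg _)
    have h4 : |⟪a i, x0⟫| * |⟪a i, x0⟫| = ⟪a i, x0⟫ * ⟪a i, x0⟫ := abs_mul_abs_self _
    rw [h1]; nlinarith [h2, h3, h4]
  have := hcert (x - x0) hh key
  have heq : ⟪φ, x - x0⟫ = ⟪φ, x⟫ - ⟪φ, x0⟫ := inner_sub_right _ _ _
  linarith [heq ▸ this]
end

section
/- Let a_1,...,a_m, x0 ∈ R^n with ‖x0‖ = 1, and suppose that (i) ⟨(1/m)∑ a_i a_iᵀ, h x0ᵀ⟩ ≥ ⟨h, x0⟩ − ε‖h‖ for all h ∈ R^n, and (ii) (1/m)∑ |⟨a_i, h⟩||⟨a_i, x0⟩| ≥ 0.63‖h‖ for all h ∈ R^n, with ε = 0.03. Then for any nonzero h with ⟨a_i, h⟩⟨a_i, x0⟩ ≤ 0 for all i, we have ⟨h, x0⟩ ≤ −0.6‖h‖. -/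
open RealInnerProductSpace Finset

theorem negative_correlation_step
    (n m : ℕ) (hm : 0 < m) (a : Fin m → EuclideanSpace ℝ (Fin n))
    (x0 : EuclideanSpace ℝ (Fin n)) (hx0 : ‖x0‖ = 1)
    (ε : ℝ) (hε : ε = 0.03)
    -- (i): ⟨(1/m)∑ aᵢaᵢᵀ, h x0ᵀ⟩ = (1/m)∑ ⟨aᵢ,h⟩⟨aᵢ,x0⟩ ≥ ⟨h,x0⟩ − ε‖h‖
    (hiso : ∀ h : EuclideanSpace ℝ (Fin n),
      (1 / (m:ℝ)) * ∑ i, ⟪a i, h⟫ * ⟪a i, x0⟫ ≥ ⟪h, x0⟫ - ε * ‖h‖)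
    -- (ii)
    (hlow : ∀ h : EuclideanSpace ℝ (Fin n),
      (1 / (m:ℝ)) * ∑ i, |⟪a i, h⟫| * |⟪a i, x0⟫| ≥ 0.63 * ‖h‖) :
    ∀ h : EuclideanSpace ℝ (Fin n), h ≠ 0 →
      (∀ i, ⟪a i, h⟫ * ⟪a i, x0⟫ ≤ 0) → ⟪h, x0⟫ ≤ -0.6 * ‖h‖ := by
  intro h hne hneg
  have hkey : ∀ i, ⟪a i, h⟫ * ⟪a i, x0⟫ = -(|⟪a i, h⟫| * |⟪a i, x0⟫|) := by
    intro i
    rw [← abs_mul, abs_of_nonpos (hneg i), neg_neg]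
  have h1 := hiso h
  have h2 := hlow h
  have hsum : (1 / (m:ℝ)) * ∑ i, ⟪a i, h⟫ * ⟪a i, x0⟫
      = -((1 / (m:ℝ)) * ∑ i, |⟪a i, h⟫| * |⟪a i, x0⟫|) := by
    rw [← mul_neg, ← Finset.sum_neg_distrib]
    congr 1
    exact Finset.sum_congr rfl fun i _ => hkey i
  rw [hsum] at h1
  have hn : (0:ℝ) ≤ ‖h‖ := norm_nonneg h
  rw [hε] at h1
  linarith
end
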